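/- Let A be a Banach algebra with a right identity e. If d : A → A is a Jordan triple right derivation, i.e., a linear map with d(a³) = 3·d(a)·a² for all a ∈ A, then d is a Jordan right derivation, i.e., d(a²) = 2·d(a)·a for all a ∈ A. -/
import Mathlib


/-- Let `A` be a complex Banach algebra with a right identity `e`.  If
`d : A → A` is a Jordan triple right derivation (`d (a³) = 3 • (d a * a²)`), then `d` is a
Jordan right derivation (`d (a²) = 2 • (d a * a)`). -/
theorem jordanTripleRightDerivation_is_jordanRightDerivation
    {A : Type*} [NonUnitalNormedRing A] [NormedSpace ℂ A]
    [IsScalarTower ℂ A A] [SMulCommClass ℂ A A] [CompleteSpace A]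
    (e : A) (he : ∀ a : A, a * e = a)
    (d : A →ₗ[ℂ] A) (hd : ∀ a : A, d (a * a * a) = 3 • (d a * (a * a))) :
    ∀ a : A, d (a * a) = 2 • (d a * a) := by
  -- cancellation of natural number scalars (A is a ℂ-vector space)
  have hcn : ∀ (n : ℕ), n ≠ 0 → ∀ x y : A, n • x = n • y → x = y := by
    intro n hn x y h
    have h' : (n : ℂ) • x = (n : ℂ) • y := by
      rw [Nat.cast_smul_eq_nsmul, Nat.cast_smul_eq_nsmul]; exact h
    exact smul_right_injective A (by exact_mod_cast hn) h'
  -- polarized identity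
  have key : ∀ a b : A, d (a*b*b) + d (b*a*b) + d (b*b*a)
      = 3 • (d a * (b*b)) + 3 • (d b * (a*b)) + 3 • (d b * (b*a)) := by
    intro a b
    have h1 := hd (a + b)
    have h2 := hd (a - b)
    have h3 := hd a
    have e1 : (a+b)*(a+b)*(a+b)
        = a*a*a + (a*a*b + a*b*a + b*a*a) + (a*b*b + b*a*b + b*b*a) + b*b*b := by
      noncomm_ring
    have e2 : (a-b)*(a-b)*(a-b)
        = a*a*a - (a*a*b + a*b*a + b*a*a) + (a*b*b + b*a*b + b*b*a) - b*b*b := by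
      noncomm_ring
    have r1 : (d a + d b) * ((a+b)*(a+b))
        = d a*(a*a) + (d a*(a*b) + d a*(b*a) + d b*(a*a))
          + (d a*(b*b) + d b*(a*b) + d b*(b*a)) + d b*(b*b) := by
      noncomm_ring
    have r2 : (d a - d b) * ((a-b)*(a-b))
        = d a*(a*a) - (d a*(a*b) + d a*(b*a) + d b*(a*a))
          + (d a*(b*b) + d b*(a*b) + d b*(b*a)) - d b*(b*b) := by
      noncomm_ring
    rw [e1] at h1
    rw [e2] at h2
    simp only [map_add, map_sub] at h1 h2
    rw [r1] at h1
    rw [r2] at h2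
    have h12 : (d (a*a*a) + (d (a*a*b) + d (a*b*a) + d (b*a*a))
          + (d (a*b*b) + d (b*a*b) + d (b*b*a)) + d (b*b*b))
        + (d (a*a*a) - (d (a*a*b) + d (a*b*a) + d (b*a*a))
          + (d (a*b*b) + d (b*a*b) + d (b*b*a)) - d (b*b*b))
        = 3 • (d a*(a*a) + (d a*(a*b) + d a*(b*a) + d b*(a*a))
          + (d a*(b*b) + d b*(a*b) + d b*(b*a)) + d b*(b*b))
        + 3 • (d a*(a*a) - (d a*(a*b) + d a*(b*a) + d b*(a*a))
          + (d a*(b*b) + d b*(a*b) + d b*(b*a)) - d b*(b*b)) := by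
      rw [h1, h2]
    rw [h3] at h12
    apply hcn 2 (by norm_num)
    abel_nf at h12 ⊢
    exact add_left_cancel h12
  have he2 : e * e = e := he e
  have hde : d e = 0 := by
    have h := hd e
    rw [he2, he2, he] at h
    apply hcn 2 (by norm_num)
    rw [smul_zero]
    calc 2 • d e = 3 • d e - d e := by abel
      _ = d e - d e := by rw [← h]
      _ = 0 := sub_self _
  have hea : ∀ a : A, d (e * a) = d a := by
    intro a
    have h := key a e
    simp only [he, hde, zero_mul, smul_zero, add_zero] at h
    apply hcn 2 (by norm_num)
    calc 2 • d (e * a) = (d a + d (e*a) + d (e*a)) - d a := by abel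
      _ = 3 • (d a) - d a := by rw [h]
      _ = 2 • d a := by abel
  intro a
  have h := key e a
  simp only [he] at h
  rw [show e*a*a = e*(a*a) from mul_assoc e a a, hea (a*a), hde] at h
  simp only [zero_mul, smul_zero, zero_add] at h
  rw [show d a * (e*a) = d a * a from by rw [← mul_assoc, he]] at h
  apply hcn 3 (by norm_num)
  calc 3 • d (a*a) = d (a*a) + d (a*a) + d (a*a) := by abel
    _ = 3 • (d a * a) + 3 • (d a * a) := h
    _ = 3 • (2 • (d a * a)) := by abel
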